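/- Let W ∈ ℝ, Γ₀ ∈ ℝ, and let g : (0,∞)×[0,T] → ℝ be a C² function, compactly supported in w ∈ (0,∞) uniformly in t, satisfying the spatially homogeneous Fokker–Planck equation ∂_t g = ∂_w((Γ₀ ρ(t) + (w − W)) g) + ∂_{ww}(w g), where ρ(t) = ∫₀^∞ g(w,t) dw. Then ρ(t) ≡ ρ is constant, and the variance V(t) = ∫₀^∞ g(w,t)(w − W)² dw and the mean m(t) = ∫₀^∞ g(w,t) w dw satisfy d/dt V(t) = 2(1 − Γ₀ ρ) m(t) + 2 Γ₀ ρ² W − 2 V(t). -/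

import Mathlib

open MeasureTheory

section Stmt15AuxSec
open Set

namespace Stmt15Aux

lemma deriv_zero_of_zero_off {f : ℝ → ℝ} {a b : ℝ}
    (hfz : ∀ w ∉ Set.Icc a b, f w = 0) {w : ℝ} (hw : w ∉ Set.Icc a b) :
    deriv f w = 0 := by
  have h : f =ᶠ[nhds w] fun _ => (0 : ℝ) := by
    filter_upwards [isClosed_Icc.isOpen_compl.mem_nhds hw] with x hx using hfz x hx
  rw [h.deriv_eq]
  exact deriv_const w 0

lemma integrable_of_zero_off {f : ℝ → ℝ} {a b : ℝ} (hf : Continuous f)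
    (hfz : ∀ w ∉ Set.Icc a b, f w = 0) : Integrable f :=
  hf.integrable_of_hasCompactSupport (HasCompactSupport.intro isCompact_Icc hfz)

lemma intA {a b : ℝ} (ha : 0 < a) {f f' : ℝ → ℝ}
    (hf : ∀ w, HasDerivAt f (f' w) w) (hf' : Continuous f')
    (hfz : ∀ w ∉ Set.Icc a b, f w = 0) :
    ∫ w in Set.Ioi (0:ℝ), f' w = 0 := by
  have hfz' : ∀ w ∉ Set.Icc a b, f' w = 0 := fun w hw => by
    rw [← (hf w).deriv]; exact deriv_zero_of_zero_off hfz hw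
  have hcd : a / 2 ≤ max b a + 1 := by
    have h1 := le_max_right b a
    linarith
  have h1 : ∫ w in Set.Ioi (0:ℝ), f' w = ∫ w, f' w :=
    setIntegral_eq_integral_of_forall_compl_eq_zero (fun w hw =>
      hfz' w (fun hm => hw (lt_of_lt_of_le ha hm.1)))
  have h2 : ∫ w in Set.Ioc (a/2) (max b a + 1), f' w = ∫ w, f' w :=
    setIntegral_eq_integral_of_forall_compl_eq_zero (fun w hw =>
      hfz' w (fun hm => hw ⟨by linarith [hm.1], by linarith [hm.2, le_max_left b a]⟩))
  have h3 : ∫ w in (a/2)..(max b a + 1), f' w = f (max b a + 1) - f (a/2) :=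
    intervalIntegral.integral_eq_sub_of_hasDerivAt (fun x _ => hf x)
      (hf'.intervalIntegrable _ _)
  rw [intervalIntegral.integral_of_le hcd] at h3
  have hfd : f (max b a + 1) = 0 := hfz _ (fun hm => by
    have := le_max_left b a; have := hm.2; linarith)
  have hfc : f (a/2) = 0 := hfz _ (fun hm => by have := hm.1; linarith)
  rw [h1, ← h2, h3, hfd, hfc, sub_zero]

lemma ibp {a b : ℝ} (ha : 0 < a) {f f' φ φ' : ℝ → ℝ}
    (hf : ∀ w, HasDerivAt f (f' w) w) (hf' : Continuous f')
    (hfz : ∀ w ∉ Set.Icc a b, f w = 0)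
    (hφ : ∀ w, HasDerivAt φ (φ' w) w) (hφc : Continuous φ) (hφ'c : Continuous φ') :
    ∫ w in Set.Ioi (0:ℝ), f' w * φ w = - ∫ w in Set.Ioi (0:ℝ), f w * φ' w := by
  have hfz' : ∀ w ∉ Set.Icc a b, f' w = 0 := fun w hw => by
    rw [← (hf w).deriv]; exact deriv_zero_of_zero_off hfz hw
  have hfc : Continuous f :=
    continuous_iff_continuousAt.2 fun w => (hf w).differentiableAt.continuousAt
  have hp : ∀ w, HasDerivAt (fun w => f w * φ w) (f' w * φ w + f w * φ' w) w :=
    fun w => (hf w).mul (hφ w)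
  have hpz : ∀ w ∉ Set.Icc a b, f w * φ w = 0 := fun w hw => by rw [hfz w hw, zero_mul]
  have h0 : ∫ w in Set.Ioi (0:ℝ), (f' w * φ w + f w * φ' w) = 0 :=
    intA ha hp ((hf'.mul hφc).add (hfc.mul hφ'c)) hpz
  have i1 : IntegrableOn (fun w => f' w * φ w) (Set.Ioi (0:ℝ)) :=
    (integrable_of_zero_off (hf'.mul hφc)
      (fun w hw => by rw [Pi.mul_apply, hfz' w hw, zero_mul])).integrableOn
  have i2 : IntegrableOn (fun w => f w * φ' w) (Set.Ioi (0:ℝ)) :=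
    (integrable_of_zero_off (hfc.mul hφ'c)
      (fun w hw => by rw [Pi.mul_apply, hfz w hw, zero_mul])).integrableOn
  rw [integral_add i1 i2] at h0
  linarith

noncomputable def pt (g : ℝ → ℝ → ℝ) (w t : ℝ) : ℝ :=
  fderiv ℝ (fun q : ℝ × ℝ => g q.1 q.2) (w, t) (0, 1)

lemma pt_hasDerivAt {g : ℝ → ℝ → ℝ}
    (hg : ContDiff ℝ 2 (fun q : ℝ × ℝ => g q.1 q.2)) (w t : ℝ) :
    HasDerivAt (fun s => g w s) (pt g w t) t := by
  have hd : HasFDerivAt (fun q : ℝ × ℝ => g q.1 q.2)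
      (fderiv ℝ (fun q : ℝ × ℝ => g q.1 q.2) (w, t)) (w, t) :=
    (hg.differentiable (by norm_num) (w, t)).hasFDerivAt
  have hc : HasDerivAt (fun s : ℝ => ((w, s) : ℝ × ℝ)) (((0 : ℝ), (1 : ℝ))) t :=
    (hasDerivAt_const t w).prodMk (hasDerivAt_id t)
  exact hd.comp_hasDerivAt t hc

lemma pt_continuous {g : ℝ → ℝ → ℝ}
    (hg : ContDiff ℝ 2 (fun q : ℝ × ℝ => g q.1 q.2)) :
    Continuous (fun q : ℝ × ℝ => pt g q.1 q.2) :=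
  (hg.continuous_fderiv (by norm_num)).clm_apply continuous_const

lemma pt_zero_off {g : ℝ → ℝ → ℝ} {a b : ℝ}
    (hz : ∀ w t, w ∉ Set.Icc a b → g w t = 0) {w : ℝ} (hw : w ∉ Set.Icc a b) (t : ℝ) :
    pt g w t = 0 := by
  have hopen : IsOpen {q : ℝ × ℝ | q.1 ∉ Set.Icc a b} :=
    isClosed_Icc.isOpen_compl.preimage continuous_fst
  have heq : (fun q : ℝ × ℝ => g q.1 q.2) =ᶠ[nhds (w, t)] fun _ => (0 : ℝ) := by
    filter_upwards [hopen.mem_nhds hw] with q hq using hz q.1 q.2 hq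
  unfold pt
  rw [heq.fderiv_eq]
  simp

lemma moment_hasDerivAt {g : ℝ → ℝ → ℝ}
    (hg : ContDiff ℝ 2 (fun q : ℝ × ℝ => g q.1 q.2))
    {a b : ℝ} (hz : ∀ w t, w ∉ Set.Icc a b → g w t = 0)
    (φ : ℝ → ℝ) (hφ : Continuous φ) (t : ℝ) :
    HasDerivAt (fun s => ∫ w in Set.Ioi (0:ℝ), g w s * φ w)
      (∫ w in Set.Ioi (0:ℝ), pt g w t * φ w) t := by
  have hgc : Continuous (fun q : ℝ × ℝ => g q.1 q.2) := hg.continuous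
  have hptc : Continuous (fun q : ℝ × ℝ => pt g q.1 q.2) := pt_continuous hg
  have hB : Continuous (fun q : ℝ × ℝ => pt g q.1 q.2 * φ q.1) :=
    hptc.mul (hφ.comp continuous_fst)
  obtain ⟨C, hC⟩ :=
    (isCompact_Icc.prod isCompact_Icc :
      IsCompact (Set.Icc a b ×ˢ Set.Icc (t - 1) (t + 1))).exists_bound_of_continuousOn
      hB.continuousOn
  set C' := max C 0 with hC'
  set bound : ℝ → ℝ := (Set.Icc a b).indicator (fun _ => C') with hbound
  refine (hasDerivAt_integral_of_dominated_loc_of_deriv_le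
    (μ := volume.restrict (Set.Ioi (0:ℝ)))
    (F := fun s w => g w s * φ w) (F' := fun s w => pt g w s * φ w)
    (bound := bound) (Metric.ball_mem_nhds t one_pos) ?_ ?_ ?_ ?_ ?_ ?_).2
  · exact Filter.Eventually.of_forall fun s =>
      ((hgc.comp (continuous_id.prodMk continuous_const)).mul hφ).aestronglyMeasurable
  · exact (integrable_of_zero_off
      ((hgc.comp (continuous_id.prodMk continuous_const)).mul hφ)
      (fun w hw => by show g w t * φ w = 0; rw [hz w t hw, zero_mul])).integrableOn
  · exact ((hptc.comp (continuous_id.prodMk continuous_const)).mul hφ).aestronglyMeasurable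
  · refine Filter.Eventually.of_forall fun w => fun s hs => ?_
    show ‖pt g w s * φ w‖ ≤ bound w
    by_cases hw : w ∈ Set.Icc a b
    · have hmem : ((w, s) : ℝ × ℝ) ∈ Set.Icc a b ×ˢ Set.Icc (t - 1) (t + 1) := by
        refine ⟨hw, ?_⟩
        rw [Metric.mem_ball, Real.dist_eq] at hs
        have := abs_lt.mp hs
        constructor <;> [linarith [this.1]; linarith [this.2]]
      have : ‖pt g w s * φ w‖ ≤ C := hC (w, s) hmem
      rw [hbound, Set.indicator_of_mem hw]
      exact this.trans (le_max_left _ _)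
    · rw [pt_zero_off hz hw s, hbound, Set.indicator_of_notMem hw]
      simp
  · exact ((integrable_indicator_iff measurableSet_Icc).2
      (integrableOn_const measure_Icc_lt_top.ne)).restrict
  · exact Filter.Eventually.of_forall fun w => fun s _ =>
      (pt_hasDerivAt hg w s).mul_const (φ w)

lemma crunch {g : ℝ → ℝ → ℝ}
    (hg : ContDiff ℝ 2 (fun q : ℝ × ℝ => g q.1 q.2))
    {a b : ℝ} (ha : 0 < a)
    (hz : ∀ w t, w ∉ Set.Icc a b → g w t = 0)
    (W r t : ℝ)
    (hpde : ∀ w ∈ Set.Ioi (0:ℝ),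
      deriv (fun s => g w s) t =
        deriv (fun u => (r + (u - W)) * g u t) w
          + deriv (deriv (fun u => u * g u t)) w) :
    (∫ w in Set.Ioi (0:ℝ), pt g w t) = 0 ∧
    (∫ w in Set.Ioi (0:ℝ), pt g w t * (w - W) ^ 2) =
      -(2 * r * (∫ w in Set.Ioi (0:ℝ), g w t * w)
          - 2 * r * W * (∫ w in Set.Ioi (0:ℝ), g w t)
          + 2 * (∫ w in Set.Ioi (0:ℝ), g w t * (w - W) ^ 2))
        + 2 * (∫ w in Set.Ioi (0:ℝ), g w t * w) := by
  have hgct : ContDiff ℝ 2 (fun u => g u t) := hg.comp (contDiff_id.prodMk contDiff_const)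
  have hgtc : Continuous (fun u => g u t) := hgct.continuous
  set f₁ : ℝ → ℝ := fun u => (r + (u - W)) * g u t with hf₁def
  set f₂ : ℝ → ℝ := deriv (fun u => u * g u t) with hf₂def
  have hf₁cd : ContDiff ℝ 2 f₁ := by
    rw [hf₁def]
    exact (contDiff_const.add (contDiff_id.sub contDiff_const)).mul hgct
  have hwgcd : ContDiff ℝ 2 (fun u => u * g u t) := contDiff_id.mul hgct
  have hf₂cd : ContDiff ℝ 1 f₂ := by
    rw [hf₂def]
    have h2 : ContDiff ℝ (1 + 1) (fun u => u * g u t) := by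
      have : ((2 : WithTop ℕ∞)) = 1 + 1 := by norm_num
      rwa [this] at hwgcd
    exact (contDiff_succ_iff_deriv.mp h2).2.2
  have hzt : ∀ w ∉ Set.Icc a b, g w t = 0 := fun w hw => hz w t hw
  have hf₁z : ∀ w ∉ Set.Icc a b, f₁ w = 0 := fun w hw => by
    rw [hf₁def]; simp [hzt w hw]
  have hwgz : ∀ w ∉ Set.Icc a b, (fun u => u * g u t) w = 0 := fun w hw => by
    simp [hzt w hw]
  have hf₂z : ∀ w ∉ Set.Icc a b, f₂ w = 0 := fun w hw =>
    deriv_zero_of_zero_off hwgz hw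
  have hf₁d : ∀ w, HasDerivAt f₁ (deriv f₁ w) w := fun w =>
    (hf₁cd.differentiable (by norm_num) w).hasDerivAt
  have hf₁'c : Continuous (deriv f₁) := hf₁cd.continuous_deriv (by norm_num)
  have hf₂d : ∀ w, HasDerivAt f₂ (deriv f₂ w) w := fun w =>
    (hf₂cd.differentiable one_ne_zero w).hasDerivAt
  have hf₂'c : Continuous (deriv f₂) := hf₂cd.continuous_deriv le_rfl
  have hf₂c : Continuous f₂ := hf₂cd.continuous
  have hwgd : ∀ w, HasDerivAt (fun u => u * g u t) (f₂ w) w := fun w =>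
    (hwgcd.differentiable (by norm_num) w).hasDerivAt
  have hpt_eq : ∀ w ∈ Set.Ioi (0:ℝ), pt g w t = deriv f₁ w + deriv f₂ w := fun w hw => by
    rw [← (pt_hasDerivAt hg w t).deriv]
    exact hpde w hw
  have i1 : IntegrableOn (fun w => deriv f₁ w) (Set.Ioi (0:ℝ)) :=
    (integrable_of_zero_off hf₁'c
      (fun w hw => deriv_zero_of_zero_off hf₁z hw)).integrableOn
  have i2 : IntegrableOn (fun w => deriv f₂ w) (Set.Ioi (0:ℝ)) :=
    (integrable_of_zero_off hf₂'c
      (fun w hw => deriv_zero_of_zero_off hf₂z hw)).integrableOn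
  constructor
  · rw [setIntegral_congr_fun measurableSet_Ioi hpt_eq, integral_add i1 i2,
      intA ha hf₁d hf₁'c hf₁z, intA ha hf₂d hf₂'c hf₂z, add_zero]
  · -- variance part
    have hφd : ∀ w : ℝ, HasDerivAt (fun w => (w - W) ^ 2) (2 * (w - W)) w := by
      intro w
      have h := ((hasDerivAt_id w).sub_const W).pow 2
      simpa [Pi.pow_def] using h
    have hφ'd : ∀ w : ℝ, HasDerivAt (fun w => 2 * (w - W)) 2 w := by
      intro w
      have h := ((hasDerivAt_id w).sub_const W).const_mul 2
      simpa using h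
    have hφc : Continuous (fun w : ℝ => (w - W) ^ 2) := (continuous_id.sub continuous_const).pow 2
    have hφ'c : Continuous (fun w : ℝ => 2 * (w - W)) := continuous_const.mul (continuous_id.sub continuous_const)
    have i1' : IntegrableOn (fun w => deriv f₁ w * (w - W) ^ 2) (Set.Ioi (0:ℝ)) :=
      (integrable_of_zero_off (hf₁'c.mul hφc)
        (fun w hw => by rw [Pi.mul_apply, deriv_zero_of_zero_off hf₁z hw, zero_mul])).integrableOn
    have i2' : IntegrableOn (fun w => deriv f₂ w * (w - W) ^ 2) (Set.Ioi (0:ℝ)) :=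
      (integrable_of_zero_off (hf₂'c.mul hφc)
        (fun w hw => by rw [Pi.mul_apply, deriv_zero_of_zero_off hf₂z hw, zero_mul])).integrableOn
    have e1 : (∫ w in Set.Ioi (0:ℝ), pt g w t * (w - W) ^ 2)
        = (∫ w in Set.Ioi (0:ℝ), deriv f₁ w * (w - W) ^ 2)
          + ∫ w in Set.Ioi (0:ℝ), deriv f₂ w * (w - W) ^ 2 := by
      rw [← integral_add i1' i2']
      refine setIntegral_congr_fun measurableSet_Ioi (fun w hw => ?_)
      rw [hpt_eq w hw]; ring
    have e3 : (∫ w in Set.Ioi (0:ℝ), deriv f₁ w * (w - W) ^ 2)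
        = - ∫ w in Set.Ioi (0:ℝ), f₁ w * (2 * (w - W)) := by
      have h := ibp ha hf₁d hf₁'c hf₁z hφd hφc hφ'c
      simpa using h
    have e4 : (∫ w in Set.Ioi (0:ℝ), deriv f₂ w * (w - W) ^ 2)
        = - ∫ w in Set.Ioi (0:ℝ), f₂ w * (2 * (w - W)) := by
      have h := ibp ha hf₂d hf₂'c hf₂z hφd hφc hφ'c
      simpa using h
    have e5 : (∫ w in Set.Ioi (0:ℝ), f₂ w * (2 * (w - W)))
        = - ∫ w in Set.Ioi (0:ℝ), (w * g w t) * 2 := by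
      have h := ibp ha hwgd hf₂c hwgz hφ'd hφ'c continuous_const
      simpa using h
    have Ig : IntegrableOn (fun w => g w t) (Set.Ioi (0:ℝ)) :=
      (integrable_of_zero_off hgtc hzt).integrableOn
    have Igw : IntegrableOn (fun w => g w t * w) (Set.Ioi (0:ℝ)) :=
      (integrable_of_zero_off (hgtc.mul continuous_id)
        (fun w hw => by simp only [Pi.mul_apply]; rw [hzt w hw, zero_mul])).integrableOn
    have Igφ : IntegrableOn (fun w => g w t * (w - W) ^ 2) (Set.Ioi (0:ℝ)) :=
      (integrable_of_zero_off (hgtc.mul hφc)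
        (fun w hw => by simp only [Pi.mul_apply]; rw [hzt w hw, zero_mul])).integrableOn
    have e6 : (∫ w in Set.Ioi (0:ℝ), f₁ w * (2 * (w - W)))
        = 2 * r * (∫ w in Set.Ioi (0:ℝ), g w t * w)
          - 2 * r * W * (∫ w in Set.Ioi (0:ℝ), g w t)
          + 2 * (∫ w in Set.Ioi (0:ℝ), g w t * (w - W) ^ 2) := by
      have hid : EqOn (fun w => f₁ w * (2 * (w - W)))
          (fun w => ((2 * r) * (g w t * w) - (2 * r * W) * (g w t))
            + 2 * (g w t * (w - W) ^ 2)) (Set.Ioi (0:ℝ)) := by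
        intro w _
        rw [hf₁def]; ring
      have J3 : Integrable (fun x => 2 * r * (g x t * x)) (volume.restrict (Set.Ioi 0)) :=
        Igw.const_mul (2 * r)
      have J4 : Integrable (fun x => 2 * r * W * g x t) (volume.restrict (Set.Ioi 0)) :=
        Ig.const_mul (2 * r * W)
      have J1 : Integrable (fun x => 2 * r * (g x t * x) - 2 * r * W * g x t)
          (volume.restrict (Set.Ioi 0)) := J3.sub J4
      have J2 : Integrable (fun x => 2 * (g x t * (x - W) ^ 2))
          (volume.restrict (Set.Ioi 0)) := Igφ.const_mul 2
      have q1 : (∫ x in Set.Ioi (0:ℝ),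
            (2 * r * (g x t * x) - 2 * r * W * g x t + 2 * (g x t * (x - W) ^ 2)))
          = (∫ x in Set.Ioi (0:ℝ), (2 * r * (g x t * x) - 2 * r * W * g x t))
            + ∫ x in Set.Ioi (0:ℝ), 2 * (g x t * (x - W) ^ 2) := integral_add J1 J2
      have q2 : (∫ x in Set.Ioi (0:ℝ), (2 * r * (g x t * x) - 2 * r * W * g x t))
          = (∫ x in Set.Ioi (0:ℝ), 2 * r * (g x t * x))
            - ∫ x in Set.Ioi (0:ℝ), 2 * r * W * g x t := integral_sub J3 J4
      have q3 : (∫ x in Set.Ioi (0:ℝ), 2 * r * (g x t * x))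
          = 2 * r * ∫ x in Set.Ioi (0:ℝ), g x t * x := integral_const_mul _ _
      have q4 : (∫ x in Set.Ioi (0:ℝ), 2 * r * W * g x t)
          = 2 * r * W * ∫ x in Set.Ioi (0:ℝ), g x t := integral_const_mul _ _
      have q5 : (∫ x in Set.Ioi (0:ℝ), 2 * (g x t * (x - W) ^ 2))
          = 2 * ∫ x in Set.Ioi (0:ℝ), g x t * (x - W) ^ 2 := integral_const_mul _ _
      rw [setIntegral_congr_fun measurableSet_Ioi hid]
      rw [q1, q2, q3, q4, q5]
    have e7 : (∫ w in Set.Ioi (0:ℝ), (w * g w t) * 2)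
        = 2 * ∫ w in Set.Ioi (0:ℝ), g w t * w := by
      have hid : EqOn (fun w : ℝ => (w * g w t) * 2)
          (fun w => 2 * (g w t * w)) (Set.Ioi (0:ℝ)) := fun w _ => by ring
      rw [setIntegral_congr_fun measurableSet_Ioi hid, integral_const_mul]
    rw [e1, e3, e4, e5, e6, e7]
    ring

end Stmt15Aux


/-- Variance evolution for the spatially homogeneous Fokker–Planck equation
`∂_t g = ∂_w((Γ₀ ρ(t) + (w - W)) g) + ∂_{ww}(w g)` with `ρ(t) = ∫₀^∞ g dw`:
for a C² solution compactly supported in `w ∈ (0,∞)` uniformly in `t`, the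
mass `ρ(t)` is constant (`≡ ρ`), and the variance
`V(t) = ∫₀^∞ g (w - W)² dw` and mean `m(t) = ∫₀^∞ g w dw` satisfy
`dV/dt = 2(1 - Γ₀ ρ) m + 2 Γ₀ ρ² W - 2 V`. -/
theorem stmt15 (T W Γ₀ : ℝ) (hT : 0 < T) (g : ℝ → ℝ → ℝ)
    (hg : ContDiff ℝ 2 (fun q : ℝ × ℝ => g q.1 q.2))
    (hsupp : ∃ K : Set ℝ, IsCompact K ∧ K ⊆ Set.Ioi (0 : ℝ) ∧
      ∀ w t, g w t ≠ 0 → w ∈ K)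
    (hpde : ∀ w ∈ Set.Ioi (0 : ℝ), ∀ t ∈ Set.Icc (0 : ℝ) T,
      deriv (fun s => g w s) t =
        deriv (fun u =>
          (Γ₀ * (∫ v in Set.Ioi (0 : ℝ), g v t) + (u - W)) * g u t) w
        + deriv (deriv (fun u => u * g u t)) w) :
    (∀ t ∈ Set.Icc (0 : ℝ) T,
      (∫ w in Set.Ioi (0 : ℝ), g w t) = ∫ w in Set.Ioi (0 : ℝ), g w 0) ∧
    (∀ t ∈ Set.Icc (0 : ℝ) T,
      HasDerivWithinAt
        (fun s => ∫ w in Set.Ioi (0 : ℝ), g w s * (w - W) ^ 2)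
        (2 * (1 - Γ₀ * ∫ w in Set.Ioi (0 : ℝ), g w 0)
            * (∫ w in Set.Ioi (0 : ℝ), g w t * w)
          + 2 * Γ₀ * (∫ w in Set.Ioi (0 : ℝ), g w 0) ^ 2 * W
          - 2 * ∫ w in Set.Ioi (0 : ℝ), g w t * (w - W) ^ 2)
        (Set.Icc 0 T) t) := by
  obtain ⟨K, hKc, hKpos, hKsupp⟩ := hsupp
  have hK'c : IsCompact (K ∪ {1}) := hKc.union isCompact_singleton
  have hK'ne : (K ∪ {1} : Set ℝ).Nonempty := ⟨1, Or.inr rfl⟩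
  have hK'pos : (K ∪ {1} : Set ℝ) ⊆ Set.Ioi 0 :=
    Set.union_subset hKpos (by simp)
  set a := sInf (K ∪ {1} : Set ℝ) with hadef
  set b := sSup (K ∪ {1} : Set ℝ) with hbdef
  have ha : 0 < a := hK'pos (hK'c.sInf_mem hK'ne)
  have hz : ∀ w t, w ∉ Set.Icc a b → g w t = 0 := by
    intro w t hw
    by_contra hne
    have hwK : w ∈ (K ∪ {1} : Set ℝ) := Or.inl (hKsupp w t hne)
    exact hw ⟨csInf_le hK'c.bddBelow hwK, le_csSup hK'c.bddAbove hwK⟩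
  have hρd : ∀ s : ℝ, HasDerivAt (fun τ => ∫ w in Set.Ioi (0:ℝ), g w τ)
      (∫ w in Set.Ioi (0:ℝ), Stmt15Aux.pt g w s) s := by
    intro s
    have h := Stmt15Aux.moment_hasDerivAt hg hz (fun _ => (1:ℝ)) continuous_const s
    simpa using h
  have hkey := fun t (ht : t ∈ Set.Icc (0:ℝ) T) =>
    Stmt15Aux.crunch hg ha hz W (Γ₀ * (∫ v in Set.Ioi (0:ℝ), g v t)) t
      (fun w hw => hpde w hw t ht)
  have part1 : ∀ t ∈ Set.Icc (0:ℝ) T,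
      (∫ w in Set.Ioi (0:ℝ), g w t) = ∫ w in Set.Ioi (0:ℝ), g w 0 := by
    have hdiff : DifferentiableOn ℝ (fun τ => ∫ w in Set.Ioi (0:ℝ), g w τ)
        (Set.Icc 0 T) := fun x _ => (hρd x).differentiableAt.differentiableWithinAt
    have hderiv : ∀ x ∈ Set.Ico (0:ℝ) T,
        derivWithin (fun τ => ∫ w in Set.Ioi (0:ℝ), g w τ) (Set.Icc 0 T) x = 0 := by
      intro x hx
      have hx' : x ∈ Set.Icc (0:ℝ) T := Set.Ico_subset_Icc_self hx
      have h := hρd x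
      rw [(hkey x hx').1] at h
      exact h.hasDerivWithinAt.derivWithin (uniqueDiffOn_Icc hT x hx')
    exact fun t ht => constant_of_derivWithin_zero hdiff hderiv t ht
  refine ⟨part1, ?_⟩
  intro t ht
  have hV := Stmt15Aux.moment_hasDerivAt hg hz (fun w => (w - W) ^ 2)
    ((continuous_id.sub continuous_const).pow 2) t
  rw [(hkey t ht).2, part1 t ht] at hV
  have heq : 2 * (1 - Γ₀ * ∫ w in Set.Ioi (0:ℝ), g w 0)
            * (∫ w in Set.Ioi (0:ℝ), g w t * w)
          + 2 * Γ₀ * (∫ w in Set.Ioi (0:ℝ), g w 0) ^ 2 * W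
          - 2 * ∫ w in Set.Ioi (0:ℝ), g w t * (w - W) ^ 2
        = -(2 * (Γ₀ * (∫ v in Set.Ioi (0:ℝ), g v 0)) * (∫ w in Set.Ioi (0:ℝ), g w t * w)
            - 2 * (Γ₀ * (∫ v in Set.Ioi (0:ℝ), g v 0)) * W * (∫ w in Set.Ioi (0:ℝ), g w 0)
            + 2 * (∫ w in Set.Ioi (0:ℝ), g w t * (w - W) ^ 2))
          + 2 * (∫ w in Set.Ioi (0:ℝ), g w t * w) := by ring
  rw [heq]
  exact hV.hasDerivWithinAt

end Stmt15AuxSec
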